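/- Let σ > 0, let X ~ N(0,1) and Δ ~ N(0,σ²) be independent real Gaussian random variables, and set γ = sign(X + Δ) − sign(X). Then P(γ = 0) = 1 − arctan(σ)/π. -/

import Mathlib

open MeasureTheory ProbabilityTheory Real
open Set
open scoped ENNReal

-- polar coordinates for lintegral
theorem lintegral_comp_polarCoord_symm' (g : ℝ × ℝ → ℝ≥0∞) :
    (∫⁻ p in polarCoord.target, ENNReal.ofReal p.1 * g (polarCoord.symm p)) = ∫⁻ p, g p := by
  set B : ℝ × ℝ → ℝ × ℝ →L[ℝ] ℝ × ℝ := fun p =>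
    LinearMap.toContinuousLinearMap (Matrix.toLin (Module.Basis.finTwoProd ℝ) (Module.Basis.finTwoProd ℝ)
      !![cos p.2, -p.1 * sin p.2; sin p.2, p.1 * cos p.2])
  have B_det : ∀ p, (B p).det = p.1 := by
    intro p
    conv_rhs => rw [← one_mul p.1, ← cos_sq_add_sin_sq p.2]
    simp only [B, neg_mul, LinearMap.det_toContinuousLinearMap, LinearMap.det_toLin,
      Matrix.det_fin_two_of, sub_neg_eq_add]
    ring
  symm
  calc
    ∫⁻ p, g p = ∫⁻ p in polarCoord.source, g p := by
      rw [← setLIntegral_univ]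
      exact setLIntegral_congr polarCoord_source_ae_eq_univ.symm
    _ = ∫⁻ p in polarCoord.symm '' polarCoord.target, g p := by
      rw [polarCoord.symm_image_target_eq_source]
    _ = ∫⁻ p in polarCoord.target, ENNReal.ofReal |(B p).det| * g (polarCoord.symm p) := by
      apply lintegral_image_eq_lintegral_abs_det_fderiv_mul volume
        polarCoord.open_target.measurableSet
        (fun p _ => (hasFDerivAt_polarCoord_symm p).hasFDerivWithinAt)
        polarCoord.symm.injOn
    _ = ∫⁻ p in polarCoord.target, ENNReal.ofReal p.1 * g (polarCoord.symm p) := by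
      apply setLIntegral_congr_fun_ae polarCoord.open_target.measurableSet
      filter_upwards with p hp
      rw [B_det, abs_of_pos hp.1]

theorem radial_integral : ∫ r in Ioi (0:ℝ), r * Real.exp (-(r^2)/2) = 1 := by
  have hb : (0:ℝ) < (1/2 : ℂ).re := by norm_num
  have hc := integral_mul_cexp_neg_mul_sq hb
  have h2 : ∫ r in Ioi (0:ℝ), ((r * Real.exp (-(r^2)/2) : ℝ) : ℂ)
      = ∫ r in Ioi (0:ℝ), (r : ℂ) * Complex.exp (-(1/2) * (r:ℂ)^2) := by
    apply setIntegral_congr_fun measurableSet_Ioi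
    intro r _
    push_cast [Complex.ofReal_exp]
    ring_nf
  have h4 : ((∫ r in Ioi (0:ℝ), r * Real.exp (-(r^2)/2) : ℝ) : ℂ) = ((1:ℝ):ℂ) :=
    (integral_ofReal).symm.trans (h2.trans (by rw [hc]; norm_num))
  exact_mod_cast h4

theorem radial_lintegral :
    ∫⁻ r in Ioi (0:ℝ), ENNReal.ofReal (r * Real.exp (-(r^2)/2)) = 1 := by
  rw [← ofReal_integral_eq_lintegral_ofReal]
  · rw [radial_integral]; simp
  · have : Integrable (fun r : ℝ => r * Real.exp (-(1/2) * r ^ 2)) :=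
      integrable_mul_exp_neg_mul_sq (by norm_num)
    refine (this.integrableOn).congr_fun (fun r _ => by ring_nf) measurableSet_Ioi
  · filter_upwards [ae_restrict_mem measurableSet_Ioi] with r hr
    exact mul_nonneg (le_of_lt hr) (Real.exp_pos _).le

theorem prod_withDensity_apply {f g : ℝ → ℝ≥0∞} (hf : Measurable f) (hg : Measurable g)
    {s : Set (ℝ × ℝ)} (hs : MeasurableSet s) :
    ((volume.withDensity f).prod (volume.withDensity g)) s
      = ∫⁻ p in s, f p.1 * g p.2 := by
  have hFG : Measurable (fun p : ℝ × ℝ => f p.1 * g p.2) :=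
    (hf.comp measurable_fst).mul (hg.comp measurable_snd)
  rw [Measure.prod_apply hs]
  rw [← lintegral_indicator hs _]
  rw [Measure.volume_eq_prod, lintegral_prod _ (hFG.indicator hs).aemeasurable]
  rw [lintegral_withDensity_eq_lintegral_mul volume hf]
  swap
  · exact measurable_measure_prodMk_left hs
  refine lintegral_congr fun x => ?_
  simp only [Pi.mul_apply]
  rw [withDensity_apply _ (measurable_prodMk_left hs)]
  rw [← lintegral_indicator (measurable_prodMk_left hs) _]
  rw [← lintegral_const_mul _ (hg.indicator (measurable_prodMk_left hs))]
  refine lintegral_congr fun y => ?_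
  by_cases h : (x, y) ∈ s <;> simp [Set.indicator_apply, h, Set.mem_preimage]

theorem angular_mem {σ : ℝ} (hσ : 0 < σ) {θ : ℝ} (hθ : θ ∈ Ioo (-π) π) :
    ((0 < Real.cos θ ∧ Real.cos θ + σ * Real.sin θ < 0) ∨
      (Real.cos θ < 0 ∧ 0 < Real.cos θ + σ * Real.sin θ))
    ↔ θ ∈ Ioo (-(π/2)) (-arctan σ⁻¹) ∪ Ioo (π/2) (π - arctan σ⁻¹) := by
  have hσ' : 0 < σ⁻¹ := inv_pos.mpr hσ
  set α := arctan σ⁻¹ with hαdef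
  have hα0 : 0 < α := by rw [hαdef, ← Real.arctan_zero]; exact Real.arctan_strictMono hσ'
  have hα2 : α < π/2 := arctan_lt_pi_div_two _
  have hπ : 0 < π := pi_pos
  have htanα : Real.tan α = σ⁻¹ := tan_arctan _
  have key : ∀ ψ ∈ Ioo (-(π/2)) (π/2), (Real.tan ψ < -σ⁻¹ ↔ ψ < -α) := by
    intro ψ hψ
    have hmem : -α ∈ Ioo (-(π/2)) (π/2) := ⟨by linarith, by linarith⟩
    rw [show -σ⁻¹ = Real.tan (-α) by rw [Real.tan_neg, htanα]]
    exact Real.strictMonoOn_tan.lt_iff_lt hψ hmem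
  constructor
  · rintro (⟨hc, hs⟩ | ⟨hc, hs⟩)
    · left
      have h1 : θ ∈ Ioo (-(π/2)) (π/2) := by
        constructor
        · by_contra h
          push_neg at h
          have : Real.cos θ ≤ 0 := by
            rw [← Real.cos_neg]
            exact Real.cos_nonpos_of_pi_div_two_le_of_le (by linarith) (by linarith [hθ.1])
          linarith
        · by_contra h
          push_neg at h
          have : Real.cos θ ≤ 0 :=
            Real.cos_nonpos_of_pi_div_two_le_of_le h (by linarith [hθ.2])
          linarith
      have htanθ : Real.tan θ < -σ⁻¹ := by
        rw [Real.tan_eq_sin_div_cos, div_lt_iff₀ hc]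
        have h2 := mul_lt_mul_of_pos_left hs hσ'
        rw [mul_zero, mul_add, ← mul_assoc, inv_mul_cancel₀ hσ.ne', one_mul] at h2
        linarith
      exact ⟨h1.1, (key θ h1).mp htanθ⟩
    · have htanθ : Real.tan θ < -σ⁻¹ := by
        rw [Real.tan_eq_sin_div_cos, div_lt_iff_of_neg hc]
        have h2 := mul_lt_mul_of_pos_left hs hσ'
        rw [mul_zero, mul_add, ← mul_assoc, inv_mul_cancel₀ hσ.ne', one_mul] at h2
        linarith
      have hcases : π/2 < θ ∨ θ < -(π/2) := by
        by_contra h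
        push_neg at h
        have : 0 ≤ Real.cos θ := Real.cos_nonneg_of_mem_Icc ⟨h.2, h.1⟩
        linarith
      rcases hcases with hh | hh
      · right
        have hψ : θ - π ∈ Ioo (-(π/2)) (π/2) := ⟨by linarith, by linarith [hθ.2]⟩
        have ht : Real.tan (θ - π) < -σ⁻¹ := by
          rwa [Real.tan_periodic.sub_eq]
        have := (key _ hψ).mp ht
        exact ⟨hh, by linarith⟩
      · exfalso
        have hψ1 : 0 < θ + π := by linarith [hθ.1]
        have hψ2 : θ + π < π/2 := by linarith
        have htp : 0 < Real.tan (θ + π) := Real.tan_pos_of_pos_of_lt_pi_div_two hψ1 hψ2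
        rw [Real.tan_periodic θ] at htp
        linarith
  · rintro (⟨h1, h2⟩ | ⟨h1, h2⟩)
    · have hmem : θ ∈ Ioo (-(π/2)) (π/2) := ⟨h1, by linarith⟩
      have hc : 0 < Real.cos θ := Real.cos_pos_of_mem_Ioo hmem
      have ht : Real.tan θ < -σ⁻¹ := (key θ hmem).mpr h2
      rw [Real.tan_eq_sin_div_cos, div_lt_iff₀ hc] at ht
      left
      refine ⟨hc, ?_⟩
      have h3 := mul_lt_mul_of_pos_left ht hσ
      have h4 : σ * (-σ⁻¹ * Real.cos θ) = -Real.cos θ := by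
        field_simp
      rw [h4] at h3
      linarith
    · have hc : Real.cos θ < 0 :=
        Real.cos_neg_of_pi_div_two_lt_of_lt h1 (by linarith)
      have hψ : θ - π ∈ Ioo (-(π/2)) (π/2) := ⟨by linarith, by linarith⟩
      have ht : Real.tan (θ - π) < -σ⁻¹ := (key _ hψ).mpr (by linarith)
      rw [Real.tan_periodic.sub_eq, Real.tan_eq_sin_div_cos, div_lt_iff_of_neg hc] at ht
      right
      refine ⟨hc, ?_⟩
      have h3 := mul_lt_mul_of_pos_left ht hσ
      have h4 : σ * (-σ⁻¹ * Real.cos θ) = -Real.cos θ := by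
        field_simp
      rw [h4] at h3
      linarith

open ProbabilityTheory in
theorem wedge_measure {σ : ℝ} (hσ : 0 < σ) :
    ((gaussianReal 0 1).prod (gaussianReal 0 1))
      {p : ℝ × ℝ | (0 < p.1 ∧ p.1 + σ * p.2 < 0) ∨ (p.1 < 0 ∧ 0 < p.1 + σ * p.2)}
    = ENNReal.ofReal (arctan σ / π) := by
  have hπ : 0 < π := pi_pos
  have hσ' : 0 < σ⁻¹ := inv_pos.mpr hσ
  have harc : 0 < arctan σ := by rw [← Real.arctan_zero]; exact Real.arctan_strictMono hσ
  have hα : arctan σ⁻¹ = π/2 - arctan σ := Real.arctan_inv_of_pos hσ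
  have harc2 : arctan σ < π/2 := arctan_lt_pi_div_two σ
  set W : Set (ℝ × ℝ) :=
    {p : ℝ × ℝ | (0 < p.1 ∧ p.1 + σ * p.2 < 0) ∨ (p.1 < 0 ∧ 0 < p.1 + σ * p.2)} with hWdef
  set A : Set ℝ := Ioo (-(π/2)) (-arctan σ⁻¹) ∪ Ioo (π/2) (π - arctan σ⁻¹) with hAdef
  have hAm : MeasurableSet A := measurableSet_Ioo.union measurableSet_Ioo
  have hlin : Measurable fun p : ℝ × ℝ => p.1 + σ * p.2 :=
    measurable_fst.add (measurable_snd.const_mul σ)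
  have hWm : MeasurableSet W := by
    apply MeasurableSet.union
    · exact (measurableSet_lt measurable_const measurable_fst).inter
        (measurableSet_lt hlin measurable_const)
    · exact (measurableSet_lt measurable_fst measurable_const).inter
        (measurableSet_lt measurable_const hlin)
  have hpdf : ∀ x y : ℝ, gaussianPDF 0 1 x * gaussianPDF 0 1 y
      = ENNReal.ofReal ((2*π)⁻¹ * Real.exp (-(x^2+y^2)/2)) := by
    intro x y
    rw [gaussianPDF, gaussianPDF, ← ENNReal.ofReal_mul (gaussianPDFReal_nonneg _ _ _)]
    congr 1
    simp only [gaussianPDFReal, NNReal.coe_one, mul_one, sub_zero]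
    have hs2 : (Real.sqrt (2*π))⁻¹ * (Real.sqrt (2*π))⁻¹ = (2*π)⁻¹ := by
      rw [← mul_inv, Real.mul_self_sqrt (by positivity)]
    calc (Real.sqrt (2*π))⁻¹ * Real.exp (-x^2/2) * ((Real.sqrt (2*π))⁻¹ * Real.exp (-y^2/2))
        = ((Real.sqrt (2*π))⁻¹ * (Real.sqrt (2*π))⁻¹) * (Real.exp (-x^2/2) * Real.exp (-y^2/2)) := by
          ring
      _ = (2*π)⁻¹ * Real.exp (-(x^2+y^2)/2) := by
          rw [hs2, ← Real.exp_add]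
          congr 1
          ring
  rw [gaussianReal_of_var_ne_zero 0 one_ne_zero]
  rw [prod_withDensity_apply (measurable_gaussianPDF 0 1) (measurable_gaussianPDF 0 1) hWm]
  have hint : ∀ p : ℝ × ℝ, gaussianPDF 0 1 p.1 * gaussianPDF 0 1 p.2
      = ENNReal.ofReal ((2*π)⁻¹ * Real.exp (-(p.1^2+p.2^2)/2)) := fun p => hpdf p.1 p.2
  simp only [hint]
  rw [← lintegral_indicator hWm]
  rw [← lintegral_comp_polarCoord_symm']
  have heq : ∀ p ∈ polarCoord.target,
      ENNReal.ofReal p.1 * W.indicator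
        (fun p : ℝ × ℝ => ENNReal.ofReal ((2*π)⁻¹ * Real.exp (-(p.1^2+p.2^2)/2)))
        (polarCoord.symm p)
      = ENNReal.ofReal (p.1 * Real.exp (-(p.1^2)/2) * (2*π)⁻¹)
          * A.indicator (fun _ => (1:ℝ≥0∞)) p.2 := by
    rintro ⟨r, θ⟩ ⟨hr, hθ⟩
    simp only [Set.mem_Ioi] at hr
    have hθ' : θ ∈ Ioo (-π) π := hθ
    have hsq : (r * Real.cos θ)^2 + (r * Real.sin θ)^2 = r^2 := by
      have h := Real.sin_sq_add_cos_sq θ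
      nlinarith [h]
    have hmemW : polarCoord.symm (r, θ) ∈ W ↔
        ((0 < Real.cos θ ∧ Real.cos θ + σ * Real.sin θ < 0) ∨
          (Real.cos θ < 0 ∧ 0 < Real.cos θ + σ * Real.sin θ)) := by
      have e1 : (0 < r * Real.cos θ) ↔ 0 < Real.cos θ :=
        ⟨fun h => by nlinarith, fun h => mul_pos hr h⟩
      have e2 : (r * Real.cos θ + σ * (r * Real.sin θ) < 0) ↔
          Real.cos θ + σ * Real.sin θ < 0 :=
        ⟨fun h => by nlinarith, fun h => by nlinarith⟩
      have e3 : (r * Real.cos θ < 0) ↔ Real.cos θ < 0 :=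
        ⟨fun h => by nlinarith, fun h => by nlinarith⟩
      have e4 : (0 < r * Real.cos θ + σ * (r * Real.sin θ)) ↔
          0 < Real.cos θ + σ * Real.sin θ :=
        ⟨fun h => by nlinarith, fun h => by nlinarith⟩
      simp only [polarCoord_symm_apply, hWdef, mem_setOf_eq]
      rw [e1, e2, e3, e4]
    by_cases hW : polarCoord.symm (r, θ) ∈ W
    · rw [Set.indicator_of_mem hW]
      have hA' : θ ∈ A := by
        rw [hAdef]
        exact (angular_mem hσ hθ').mp (hmemW.mp hW)
      rw [Set.indicator_of_mem hA']
      rw [polarCoord_symm_apply]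
      simp only
      rw [hsq, mul_one, ← ENNReal.ofReal_mul hr.le]
      congr 1
      ring
    · rw [Set.indicator_of_notMem hW, Set.indicator_of_notMem
        (fun hA' => hW (hmemW.mpr ((angular_mem hσ hθ').mpr hA')))]
      rw [mul_zero, mul_zero]
  rw [setLIntegral_congr_fun_ae polarCoord.open_target.measurableSet (ae_of_all _ heq)]
  have hcont : Continuous fun r : ℝ => r * Real.exp (-(r^2)/2) :=
    continuous_id.mul (Real.continuous_exp.comp (((continuous_pow 2).neg).div_const 2))
  have hFm : Measurable fun r : ℝ => ENNReal.ofReal (r * Real.exp (-(r^2)/2) * (2*π)⁻¹) :=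
    (hcont.mul continuous_const).measurable.ennreal_ofReal
  have hGm : Measurable (A.indicator (fun _ => (1:ℝ≥0∞))) :=
    measurable_const.indicator hAm
  rw [show polarCoord.target = Ioi (0:ℝ) ×ˢ Ioo (-π) π from rfl]
  rw [Measure.volume_eq_prod, ← Measure.prod_restrict]
  rw [lintegral_prod_mul hFm.aemeasurable hGm.aemeasurable]
  have hradial : ∫⁻ r in Ioi (0:ℝ), ENNReal.ofReal (r * Real.exp (-(r^2)/2) * (2*π)⁻¹)
      = ENNReal.ofReal ((2*π)⁻¹) := by
    have : ∀ r : ℝ, ENNReal.ofReal (r * Real.exp (-(r^2)/2) * (2*π)⁻¹)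
        = ENNReal.ofReal (r * Real.exp (-(r^2)/2)) * ENNReal.ofReal ((2*π)⁻¹) := by
      intro r
      rcases le_or_gt r 0 with h | h
      · rw [ENNReal.ofReal_mul']
        positivity
      · rw [ENNReal.ofReal_mul (by positivity)]
    simp only [this]
    rw [lintegral_mul_const _ hcont.measurable.ennreal_ofReal]
    rw [radial_lintegral, one_mul]
  have hangular : ∫⁻ θ in Ioo (-π) π, A.indicator (fun _ => (1:ℝ≥0∞)) θ
      = ENNReal.ofReal (2 * arctan σ) := by
    rw [lintegral_indicator hAm]
    simp only [lintegral_const, Measure.restrict_apply MeasurableSet.univ, univ_inter,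
      one_mul]
    rw [Measure.restrict_apply hAm]
    have hsub : A ∩ Ioo (-π) π = A := by
      apply inter_eq_left.mpr
      rw [hAdef]
      apply union_subset
      · exact Ioo_subset_Ioo (by linarith) (by rw [hα]; linarith)
      · exact Ioo_subset_Ioo (by linarith) (by rw [hα]; linarith)
    rw [hsub, hAdef]
    have hdisj : Disjoint (Ioo (-(π/2)) (-arctan σ⁻¹)) (Ioo (π/2) (π - arctan σ⁻¹)) := by
      rw [Set.disjoint_left]
      rintro x ⟨_, hx2⟩ ⟨hx3, _⟩
      rw [hα] at hx2
      linarith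
    rw [measure_union hdisj measurableSet_Ioo]
    rw [Real.volume_Ioo, Real.volume_Ioo, hα]
    rw [← ENNReal.ofReal_add (by linarith) (by linarith)]
    congr 1
    ring
  rw [hradial, hangular, ← ENNReal.ofReal_mul (by positivity)]
  congr 1
  rw [eq_comm, div_eq_iff hπ.ne']
  field_simp

open ProbabilityTheory in
/-- If `X ~ N(0,1)` and `Δ ~ N(0,σ²)` are independent (with `σ > 0`) and
`γ = sign(X + Δ) − sign X`, then `P(γ = 0) = 1 − arctan σ / π`.  Here `Real.sign t` is `1`
if `t > 0`, `-1` if `t < 0` and `0` if `t = 0`. -/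
theorem prob_sign_change_eq_zero
    {Ω : Type*} [MeasurableSpace Ω] (μ : Measure Ω) [IsProbabilityMeasure μ]
    (σ : ℝ) (hσ : 0 < σ) (X Δ : Ω → ℝ)
    (hX : Measure.map X μ = gaussianReal 0 1)
    (hΔ : Measure.map Δ μ = gaussianReal 0 ⟨σ ^ 2, sq_nonneg σ⟩)
    (hXΔ : IndepFun X Δ μ) :
    μ {ω | Real.sign (X ω + Δ ω) - Real.sign (X ω) = 0}
      = ENNReal.ofReal (1 - Real.arctan σ / Real.pi) := by
  have hπ : 0 < π := pi_pos
  have harc : 0 < arctan σ := by rw [← Real.arctan_zero]; exact Real.arctan_strictMono hσ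
  have hXm : AEMeasurable X μ := aemeasurable_of_map_neZero (by rw [hX]; infer_instance)
  have hΔm : AEMeasurable Δ μ := aemeasurable_of_map_neZero (by rw [hΔ]; haveI := instIsProbabilityMeasureGaussianReal 0 ⟨σ ^ 2, sq_nonneg σ⟩; infer_instance)
  set γ1 : Measure ℝ := gaussianReal 0 1 with hγ1
  have hjoint : Measure.map (fun ω => (X ω, Δ ω)) μ
      = γ1.prod (gaussianReal 0 ⟨σ ^ 2, sq_nonneg σ⟩) := by
    rw [← hX, ← hΔ]
    exact (indepFun_iff_map_prod_eq_prod_map_map hXm hΔm).mp hXΔ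
  have hsign : Measurable Real.sign := by
    unfold Real.sign
    exact Measurable.ite (measurableSet_lt measurable_id' measurable_const) measurable_const
      (Measurable.ite (measurableSet_lt measurable_const measurable_id') measurable_const
        measurable_const)
  set S : Set (ℝ × ℝ) := {p : ℝ × ℝ | Real.sign (p.1 + p.2) - Real.sign p.1 = 0} with hSdef
  have hSm : MeasurableSet S := by
    have h : Measurable fun p : ℝ × ℝ => Real.sign (p.1 + p.2) - Real.sign p.1 :=
      ((hsign.comp (measurable_fst.add measurable_snd)).sub (hsign.comp measurable_fst))
    exact h (measurableSet_singleton 0)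
  have hev : {ω | Real.sign (X ω + Δ ω) - Real.sign (X ω) = 0}
      = (fun ω => (X ω, Δ ω)) ⁻¹' S := rfl
  rw [hev, ← Measure.map_apply_of_aemeasurable (hXm.prodMk hΔm) hSm, hjoint]
  -- rescale the second coordinate
  have hmap : gaussianReal 0 ⟨σ ^ 2, sq_nonneg σ⟩ = Measure.map (fun x : ℝ => σ * x) γ1 := by
    rw [hγ1, show (fun x : ℝ => σ * x) = (σ * ·) from rfl, gaussianReal_map_const_mul σ]
    congr 1
    · ring
    · ext
      simp
      rfl
  have hmm : Measurable (Prod.map (id : ℝ → ℝ) (fun x : ℝ => σ * x)) :=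
    measurable_id.prodMap (measurable_const_mul σ)
  have hprodmap : γ1.prod (gaussianReal 0 ⟨σ ^ 2, sq_nonneg σ⟩)
      = Measure.map (Prod.map id (fun x : ℝ => σ * x)) (γ1.prod γ1) := by
    rw [hmap]
    calc γ1.prod (Measure.map (fun x : ℝ => σ * x) γ1)
        = (Measure.map id γ1).prod (Measure.map (fun x : ℝ => σ * x) γ1) := by
          rw [Measure.map_id]
      _ = Measure.map (Prod.map id (fun x : ℝ => σ * x)) (γ1.prod γ1) :=
          Measure.map_prod_map _ _ measurable_id (measurable_const_mul σ)
  rw [hprodmap, Measure.map_apply hmm hSm]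
  set S' : Set (ℝ × ℝ) := {p : ℝ × ℝ | Real.sign (p.1 + σ * p.2) - Real.sign p.1 = 0}
    with hS'def
  have hpre : Prod.map (id : ℝ → ℝ) (fun x : ℝ => σ * x) ⁻¹' S = S' := by
    ext ⟨x, y⟩
    simp [hSdef, hS'def, Prod.map]
  rw [hpre]
  set W : Set (ℝ × ℝ) :=
    {p : ℝ × ℝ | (0 < p.1 ∧ p.1 + σ * p.2 < 0) ∨ (p.1 < 0 ∧ 0 < p.1 + σ * p.2)} with hWdef
  have hlin : Measurable fun p : ℝ × ℝ => p.1 + σ * p.2 :=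
    measurable_fst.add (measurable_snd.const_mul σ)
  have hWm : MeasurableSet W := by
    apply MeasurableSet.union
    · exact (measurableSet_lt measurable_const measurable_fst).inter
        (measurableSet_lt hlin measurable_const)
    · exact (measurableSet_lt measurable_fst measurable_const).inter
        (measurableSet_lt measurable_const hlin)
  set N : Set (ℝ × ℝ) := {p : ℝ × ℝ | p.1 = 0} ∪ {p : ℝ × ℝ | p.1 + σ * p.2 = 0} with hNdef
  have hγabs : γ1 ≪ volume := gaussianReal_absolutelyContinuous 0 one_ne_zero
  have hN : (γ1.prod γ1) N = 0 := by
    apply measure_union_null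
    · have h1 : {p : ℝ × ℝ | p.1 = 0} = ({0} : Set ℝ) ×ˢ (univ : Set ℝ) := by
        ext ⟨x, y⟩
        simp [eq_comm]
      rw [h1, Measure.prod_prod]
      rw [hγabs (Real.volume_singleton)]
      simp
    · have hm2 : MeasurableSet {p : ℝ × ℝ | p.1 + σ * p.2 = 0} :=
        hlin (measurableSet_singleton 0)
      rw [Measure.prod_apply hm2]
      have hz : ∀ x : ℝ, γ1 (Prod.mk x ⁻¹' {p : ℝ × ℝ | p.1 + σ * p.2 = 0}) = 0 := by
        intro x
        have hset : Prod.mk x ⁻¹' {p : ℝ × ℝ | p.1 + σ * p.2 = 0} = {-x / σ} := by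
          ext y
          simp only [mem_preimage, mem_setOf_eq, mem_singleton_iff]
          constructor
          · intro h
            field_simp
            linarith
          · intro h
            rw [h]
            field_simp
            ring
        rw [hset]
        exact hγabs (Real.volume_singleton)
      simp only [hz]
      simp
  have hpt : ∀ p : ℝ × ℝ, p ∉ N → (p ∈ S' ↔ p ∈ Wᶜ) := by
    rintro ⟨x, y⟩ hp
    simp only [hNdef, mem_union, mem_setOf_eq, not_or] at hp
    obtain ⟨h1, h2⟩ := hp
    simp only [hS'def, hWdef, mem_setOf_eq, mem_compl_iff, sub_eq_zero]
    rcases Ne.lt_or_gt h1 with hb | hb <;> rcases Ne.lt_or_gt h2 with ha | ha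
    · refine iff_of_true ?_ ?_
      · rw [Real.sign_of_neg ha, Real.sign_of_neg hb]
      · rintro (⟨h, _⟩ | ⟨_, h⟩) <;> linarith
    · refine iff_of_false ?_ ?_
      · rw [Real.sign_of_pos ha, Real.sign_of_neg hb]
        norm_num
      · intro h
        exact h (Or.inr ⟨hb, ha⟩)
    · refine iff_of_false ?_ ?_
      · rw [Real.sign_of_neg ha, Real.sign_of_pos hb]
        norm_num
      · intro h
        exact h (Or.inl ⟨hb, ha⟩)
    · refine iff_of_true ?_ ?_
      · rw [Real.sign_of_pos ha, Real.sign_of_pos hb]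
      · rintro (⟨_, h⟩ | ⟨h, _⟩) <;> linarith
  have haeq : S' =ᵐ[γ1.prod γ1] (Wᶜ : Set (ℝ × ℝ)) := by
    rw [MeasureTheory.ae_eq_set]
    constructor
    · refine measure_mono_null ?_ hN
      intro p hp
      by_contra hpN
      exact hp.2 ((hpt p hpN).mp hp.1)
    · refine measure_mono_null ?_ hN
      intro p hp
      by_contra hpN
      exact hp.2 ((hpt p hpN).mpr hp.1)
  rw [measure_congr haeq]
  rw [prob_compl_eq_one_sub hWm]
  rw [wedge_measure hσ]
  rw [ENNReal.ofReal_sub 1 (div_nonneg harc.le hπ.le), ENNReal.ofReal_one]
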